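/- arXiv:0910.4886 — 2 statements merged into one kernel-verified Lean document; each statement's English description precedes it below -/
import Mathlib

section
/- Let Γ be a finite simplicial graph whose vertices are labeled by nontrivial cyclic groups, let G_Γ be the associated graph product, and let v, w be distinct non-adjacent vertices lying in the same connected component of Γ. Let C₀ be the connected component of Γ∖st(v) containing w and D₀ the connected component of Γ∖st(w) containing v. Then the partial conjugations π_{v,C₀} and π_{w,D₀} do NOT commute in Aut(G_Γ); indeed π_{v,C₀}(π_{w,D₀}(v)) = vwvw⁻¹v⁻¹ while π_{w,D₀}(π_{v,C₀}(v)) = wvw⁻¹, and these elements are distinct in G_Γ. -/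
open Monoid

namespace ArXiv

universe u uG

variable {V : Type u}

/-- The star of a vertex: the vertex together with its neighbors. -/
def star (Γ : SimpleGraph V) (v : V) : Set V := insert v (Γ.neighborSet v)

/-- `C ⊆ V` is the vertex set of a connected component of the full subgraph of `Γ`
induced on `S`. -/
def IsCompOf (Γ : SimpleGraph V) (S : Set V) (C : Set V) : Prop :=
  ∃ c : (Γ.induce S).ConnectedComponent, C = Subtype.val '' c.supp

/-- `Γ` has a separating intersection of links: there are distinct non-adjacent vertices
`v, w` such that some connected component of `Γ ∖ (lk(v) ∩ lk(w))` contains neither `v`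
nor `w`. -/
def HasSIL (Γ : SimpleGraph V) : Prop :=
  ∃ v w : V, v ≠ w ∧ ¬ Γ.Adj v w ∧
    ∃ C : Set V, IsCompOf Γ ((Γ.neighborSet v ∩ Γ.neighborSet w)ᶜ) C ∧ v ∉ C ∧ w ∉ C

variable (Γ : SimpleGraph V) (G : V → Type uG) [∀ v, Group (G v)]

/-- The commutator relators defining the graph product. -/
def rels : Set (Monoid.CoprodI G) :=
  {x | ∃ (v w : V) (_ : Γ.Adj v w) (g : G v) (h : G w),
    x = CoprodI.of g * CoprodI.of h * (CoprodI.of g)⁻¹ * (CoprodI.of h)⁻¹}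

/-- The graph product of the vertex groups `G v` over the graph `Γ`: the quotient of the
free product by the normal closure of the commutators of adjacent vertex groups. -/
def GraphProduct : Type (max u uG) :=
  Monoid.CoprodI G ⧸ Subgroup.normalClosure (rels Γ G)

instance : Group (GraphProduct Γ G) :=
  inferInstanceAs (Group (Monoid.CoprodI G ⧸ Subgroup.normalClosure (rels Γ G)))

/-- The canonical map from a vertex group into the graph product. -/
def of {v : V} : G v →* GraphProduct Γ G :=
  (QuotientGroup.mk' (Subgroup.normalClosure (rels Γ G))).comp CoprodI.of

theorem of_commute {v w : V} (h : Γ.Adj v w) (g : G v) (k : G w) :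
    Commute (of Γ G g) (of Γ G k) := by
  rw [← commutatorElement_eq_one_iff_commute]
  have hmem : (CoprodI.of g * CoprodI.of k * (CoprodI.of g)⁻¹ * (CoprodI.of k)⁻¹ :
      Monoid.CoprodI G) ∈ Subgroup.normalClosure (rels Γ G) :=
    Subgroup.subset_normalClosure ⟨v, w, h, g, k, rfl⟩
  have h1 : (QuotientGroup.mk' (Subgroup.normalClosure (rels Γ G)))
      (CoprodI.of g * CoprodI.of k * (CoprodI.of g)⁻¹ * (CoprodI.of k)⁻¹) = 1 :=
    (QuotientGroup.eq_one_iff _).mpr hmem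
  simp only [map_mul, map_inv] at h1
  rw [commutatorElement_def]
  exact h1

/-- `π` is the partial conjugation `π_{v,C}`, for vertex groups with chosen generators
`gen`: it conjugates the generators in `C` by (the generator of) `v` and fixes all other
generators. -/
def IsPartialConj (gen : ∀ v, G v) (π : MulAut (GraphProduct Γ G)) (v : V) (C : Set V) :
    Prop :=
  (∀ u ∈ C, ∀ g : G u, π (of Γ G g) = of Γ G (gen v) * of Γ G g * (of Γ G (gen v))⁻¹) ∧
  (∀ u ∉ C, ∀ g : G u, π (of Γ G g) = of Γ G g)

/-- `π` is the partial conjugation `π_{a,C}` by the element `a` of the vertex group `G v`: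
it conjugates the vertex groups in `C` by `a` and fixes all other vertex groups. -/
def IsPartialConjBy {v : V} (a : G v) (π : MulAut (GraphProduct Γ G)) (C : Set V) : Prop :=
  (∀ u ∈ C, ∀ g : G u, π (of Γ G g) = of Γ G a * of Γ G g * (of Γ G a)⁻¹) ∧
  (∀ u ∉ C, ∀ g : G u, π (of Γ G g) = of Γ G g)

/-- The vertex set of the graph `Γ̃`: pairs `p_{v,C}` where `C` is a connected component
of `Γ ∖ st(v)`. -/
def TV : Type u := {p : V × Set V // IsCompOf Γ ((star Γ p.1)ᶜ) p.2}

/-- The graph `Γ̃`: vertices `p_{v,C}` and `p_{w,D}` are joined by an edge unless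
`v, w` are distinct non-adjacent vertices with `v ∈ D` and `w ∈ C`. -/
def tilde : SimpleGraph (TV Γ) where
  Adj p q := p ≠ q ∧
    ¬(p.1.1 ≠ q.1.1 ∧ ¬ Γ.Adj p.1.1 q.1.1 ∧ p.1.1 ∈ q.1.2 ∧ q.1.1 ∈ p.1.2)
  symm := ⟨by
    rintro p q ⟨h1, h2⟩
    exact ⟨h1.symm, fun ⟨a, b, c, d⟩ => h2 ⟨a.symm, fun e => b e.symm, d, c⟩⟩⟩
  loopless := ⟨fun p h => h.1 rfl⟩

/-- The graph product `G_{Γ̃}`, where the vertex `p_{v,C}` is labeled by (a copy of) the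
group `G v`. -/
abbrev TildeProduct : Type (max u uG) :=
  GraphProduct (tilde Γ) (fun p : TV Γ => G p.1.1)

/-- The element `p_v = ∏_C p_{v,C} ∈ G_{Γ̃}`, the product over all connected components
`C` of `Γ ∖ st(v)` (the factors pairwise commute). -/
noncomputable def pvert [Finite V] (gen : ∀ v, G v) (v : V) : TildeProduct Γ G :=
  haveI : Fintype {C : Set V // IsCompOf Γ ((star Γ v)ᶜ) C} := Fintype.ofFinite _
  Finset.noncommProd (Finset.univ : Finset {C : Set V // IsCompOf Γ ((star Γ v)ᶜ) C})
    (fun c => of (tilde Γ) (fun p : TV Γ => G p.1.1) (v := ⟨(v, c.1), c.2⟩) (gen v))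
    (by
      intro a _ b _ hab
      have hadj : (tilde Γ).Adj ⟨(v, a.1), a.2⟩ ⟨(v, b.1), b.2⟩ := by
        show _ ∧ _
        refine ⟨fun h => hab (Subtype.ext (congrArg (fun x : TV Γ => x.1.2) h)), ?_⟩
        rintro ⟨hne, -⟩
        exact hne rfl
      exact of_commute (tilde Γ) (fun p : TV Γ => G p.1.1) hadj (gen v) (gen v))

/-- The set `Δ` of vertices adjacent to every other vertex of `Γ`. -/
def Delta (Γ : SimpleGraph V) : Set V := {v | ∀ u, u ≠ v → Γ.Adj v u}

/-- The subgroup of the graph product generated by the vertex groups `G v`, `v ∈ T`. -/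
def vertexSubgroup (T : Set V) : Subgroup (GraphProduct Γ G) :=
  Subgroup.closure {x | ∃ v ∈ T, ∃ g : G v, x = of Γ G g}

/-- `w` is a reduced word for the element `g` of the graph product: a minimal length
expression of `g` as a product of nontrivial elements of vertex groups. -/
def IsReducedWord (g : GraphProduct Γ G) (w : List (Σ v : V, G v)) : Prop :=
  (w.map fun l => of Γ G l.2).prod = g ∧ (∀ l ∈ w, l.2 ≠ 1) ∧
    ∀ w' : List (Σ v : V, G v), (w'.map fun l => of Γ G l.2).prod = g →
      w.length ≤ w'.length

lemma coprodI_key {ι : Type*} {M : ι → Type*} [∀ i, Group (M i)]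
    {i j : ι} (hij : i ≠ j) {a : M i} {b : M j} (ha : a ≠ 1) (hb : b ≠ 1) :
    CoprodI.of a * CoprodI.of b * CoprodI.of a * (CoprodI.of b)⁻¹ * (CoprodI.of a)⁻¹ ≠
      CoprodI.of b * CoprodI.of a * (CoprodI.of b)⁻¹ := by
  classical
  intro h
  have ha' : a⁻¹ ≠ 1 := inv_ne_one.2 ha
  have hb' : b⁻¹ ≠ 1 := inv_ne_one.2 hb
  set W1 : CoprodI.Word M :=
    ⟨[⟨i, a⟩, ⟨j, b⟩, ⟨i, a⟩, ⟨j, b⁻¹⟩, ⟨i, a⁻¹⟩],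
      by simp [ha, hb, ha', hb'],
      by simp [List.isChain_cons_cons, hij, hij.symm]⟩ with hW1
  set W2 : CoprodI.Word M :=
    ⟨[⟨j, b⟩, ⟨i, a⟩, ⟨j, b⁻¹⟩],
      by simp [ha, hb, hb'],
      by simp [List.isChain_cons_cons, hij, hij.symm]⟩ with hW2
  have hp1 : W1.prod =
      CoprodI.of a * CoprodI.of b * CoprodI.of a * (CoprodI.of b)⁻¹ * (CoprodI.of a)⁻¹ := by
    simp [CoprodI.Word.prod, hW1, mul_assoc]
  have hp2 : W2.prod = CoprodI.of b * CoprodI.of a * (CoprodI.of b)⁻¹ := by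
    simp [CoprodI.Word.prod, hW2, mul_assoc]
  have hinj : Function.Injective (CoprodI.Word.prod (M := M)) :=
    (CoprodI.Word.equiv (M := M)).symm.injective
  have hW : W1 = W2 := hinj (by rw [hp1, hp2, h])
  have := congrArg (fun w : CoprodI.Word M => w.toList.length) hW
  simp [hW1, hW2] at this

open scoped commutatorElement in
lemma exists_retraction (Γ : SimpleGraph V) (G : V → Type uG) [∀ u, Group (G u)]
    (v w : V) (hadj : ¬ Γ.Adj v w) :
    ∃ φ : GraphProduct Γ G →* Monoid.CoprodI G,
      (∀ g : G v, φ (of Γ G g) = CoprodI.of g) ∧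
      (∀ g : G w, φ (of Γ G g) = CoprodI.of g) := by
  classical
  set f : ∀ u, G u →* Monoid.CoprodI G :=
    fun u => if u = v ∨ u = w then CoprodI.of else 1 with hf
  have hker : ∀ x ∈ Subgroup.normalClosure (rels Γ G), CoprodI.lift f x = 1 := by
    have hle : Subgroup.normalClosure (rels Γ G) ≤ (CoprodI.lift f).ker := by
      apply Subgroup.normalClosure_le_normal
      rintro x ⟨u, u', huu', g, h, rfl⟩
      have hcomm : Commute (f u g) (f u' h) := by
        by_cases hu : u = v ∨ u = w
        · by_cases hu' : u' = v ∨ u' = w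
          · exfalso
            rcases hu with rfl | rfl <;> rcases hu' with rfl | rfl
            · exact Γ.loopless.irrefl _ huu'
            · exact hadj huu'
            · exact hadj huu'.symm
            · exact Γ.loopless.irrefl _ huu'
          · have : f u' = 1 := by simp [hf, hu']
            rw [this]; exact Commute.one_right _
        · have : f u = 1 := by simp [hf, hu]
          rw [this]; exact Commute.one_left _
      have : CoprodI.lift f
          (CoprodI.of g * CoprodI.of h * (CoprodI.of g)⁻¹ * (CoprodI.of h)⁻¹) =
          ⁅f u g, f u' h⁆ := by
        simp [commutatorElement_def]
      simp only [SetLike.mem_coe, MonoidHom.mem_ker]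
      rw [this, commutatorElement_eq_one_iff_commute]
      exact hcomm
    exact fun x hx => hle hx
  refine ⟨QuotientGroup.lift (Subgroup.normalClosure (rels Γ G)) (CoprodI.lift f) hker,
    ?_, ?_⟩
  · intro g
    have h0 : of Γ G g =
        QuotientGroup.mk' (Subgroup.normalClosure (rels Γ G)) (CoprodI.of g) := rfl
    rw [h0]
    erw [QuotientGroup.lift_mk']
    simp [hf]
  · intro g
    have h0 : of Γ G g =
        QuotientGroup.mk' (Subgroup.normalClosure (rels Γ G)) (CoprodI.of g) := rfl
    rw [h0]
    erw [QuotientGroup.lift_mk']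
    simp [hf]

lemma gen_ne_one {H : Type*} [Group H] [Nontrivial H] {a : H}
    (ha : Subgroup.zpowers a = ⊤) : a ≠ 1 := by
  rintro rfl
  obtain ⟨x, hx⟩ := exists_ne (1 : H)
  have hm : x ∈ Subgroup.zpowers (1 : H) := ha ▸ Subgroup.mem_top x
  obtain ⟨n, hn⟩ := hm
  exact hx (by simpa using hn.symm)

/-- The partial conjugations `π_{v,C₀}` and `π_{w,D₀}` do not commute:
`π_{v,C₀}(π_{w,D₀}(v)) = vwvw⁻¹v⁻¹` while `π_{w,D₀}(π_{v,C₀}(v)) = wvw⁻¹`, and these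
elements are distinct in the graph product. -/
theorem partialConj_not_commute {V : Type u} [Finite V] (Γ : SimpleGraph V)
    (G : V → Type uG) [∀ v, Group (G v)] [∀ v, Nontrivial (G v)]
    (gen : ∀ v, G v) (hgen : ∀ v, Subgroup.zpowers (gen v) = ⊤)
    (v w : V) (hvw : v ≠ w) (hadj : ¬ Γ.Adj v w) (hreach : Γ.Reachable v w)
    (C₀ D₀ : Set V)
    (hC₀ : IsCompOf Γ ((star Γ v)ᶜ) C₀) (hwC₀ : w ∈ C₀)
    (hD₀ : IsCompOf Γ ((star Γ w)ᶜ) D₀) (hvD₀ : v ∈ D₀)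
    (π₁ π₂ : MulAut (GraphProduct Γ G))
    (hπ₁ : IsPartialConj Γ G gen π₁ v C₀) (hπ₂ : IsPartialConj Γ G gen π₂ w D₀) :
    π₁ (π₂ (of Γ G (gen v))) =
      of Γ G (gen v) * of Γ G (gen w) * of Γ G (gen v) * (of Γ G (gen w))⁻¹ *
        (of Γ G (gen v))⁻¹ ∧
    π₂ (π₁ (of Γ G (gen v))) = of Γ G (gen w) * of Γ G (gen v) * (of Γ G (gen w))⁻¹ ∧
    of Γ G (gen v) * of Γ G (gen w) * of Γ G (gen v) * (of Γ G (gen w))⁻¹ *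
        (of Γ G (gen v))⁻¹ ≠
      of Γ G (gen w) * of Γ G (gen v) * (of Γ G (gen w))⁻¹ ∧
    ¬ Commute π₁ π₂ := by
  classical
  have hvC₀ : v ∉ C₀ := by
    obtain ⟨c, rfl⟩ := hC₀
    rintro ⟨⟨x, hx⟩, -, h⟩
    have hxe : x = v := h
    rw [hxe] at hx
    exact hx (Set.mem_insert _ _)
  have hwD₀ : w ∉ D₀ := by
    obtain ⟨c, rfl⟩ := hD₀
    rintro ⟨⟨x, hx⟩, -, h⟩
    have hxe : x = w := h
    rw [hxe] at hx
    exact hx (Set.mem_insert _ _)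
  set a := of Γ G (gen v) with haa
  set b := of Γ G (gen w) with hbb
  have h1 : π₂ a = b * a * b⁻¹ := hπ₂.1 v hvD₀ (gen v)
  have h2 : π₁ a = a := hπ₁.2 v hvC₀ (gen v)
  have h3 : π₁ b = a * b * a⁻¹ := hπ₁.1 w hwC₀ (gen w)
  have h4 : π₂ b = b := hπ₂.2 w hwD₀ (gen w)
  have eq1 : π₁ (π₂ a) = a * b * a * b⁻¹ * a⁻¹ := by
    rw [h1]
    rw [map_mul, map_mul, map_inv, h2, h3]
    group
  have eq2 : π₂ (π₁ a) = b * a * b⁻¹ := by rw [h2, h1]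
  have hne : a * b * a * b⁻¹ * a⁻¹ ≠ b * a * b⁻¹ := by
    obtain ⟨φ, hφv, hφw⟩ := exists_retraction Γ G v w hadj
    intro h
    have := congrArg φ h
    simp only [map_mul, map_inv, hφv, hφw, haa, hbb] at this
    exact coprodI_key hvw (gen_ne_one (hgen v)) (gen_ne_one (hgen w)) this
  refine ⟨eq1, eq2, hne, ?_⟩
  intro hc
  have : (π₁ * π₂) a = (π₂ * π₁) a := by rw [hc]
  rw [MulAut.mul_apply, MulAut.mul_apply, eq1, eq2] at this
  exact hne this

end ArXiv
end

section
/- Let Γ be a finite connected simplicial graph with no SIL whose vertices are labeled by nontrivial cyclic groups, and let G_Γ be the associated graph product. Fix an enumeration v₁, …, v_n of the vertex set and, for each i and each connected component C of Γ∖st(v_i), an integer k_{v_i,C}. Then the automorphism ∏_{i=1}^{n} ∏_{C} π_{v_i,C}^{k_{v_i,C}} of G_Γ is an inner automorphism if and only if for each i the exponents k_{v_i,C} are congruent modulo the order of G_{v_i} for all connected components C of Γ∖st(v_i) (where for infinite cyclic G_{v_i} this means the exponents are equal). -/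
open Monoid

namespace ArXiv

universe u uG

variable {V : Type u}

variable (Γ : SimpleGraph V) (G : V → Type uG) [∀ v, Group (G v)]

/-! ### Auxiliary infrastructure -/

section Aux

variable {Γ : SimpleGraph V} {G : V → Type uG} [∀ v, Group (G v)]

theorem mk_surj (x : GraphProduct Γ G) :
    ∃ y : Monoid.CoprodI G,
      (QuotientGroup.mk' (Subgroup.normalClosure (rels Γ G))) y = x :=
  QuotientGroup.mk'_surjective _ x

theorem hom_ext {K : Type*} [Monoid K] {f g : GraphProduct Γ G →* K}
    (h : ∀ (v : V) (x : G v), f (of Γ G x) = g (of Γ G x)) : f = g := by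
  ext x
  obtain ⟨y, rfl⟩ := mk_surj x
  induction y using Monoid.CoprodI.induction_on with
  | one => exact (map_one f).trans (map_one g).symm
  | of i m => exact h i m
  | mul a b ha hb =>
    rw [map_mul]
    exact (map_mul f _ _).trans ((congrArg₂ (· * ·) ha hb).trans (map_mul g _ _).symm)

theorem aut_ext {e₁ e₂ : MulAut (GraphProduct Γ G)}
    (h : ∀ (v : V) (x : G v), e₁ (of Γ G x) = e₂ (of Γ G x)) : e₁ = e₂ := by
  have h2 := hom_ext (f := e₁.toMonoidHom) (g := e₂.toMonoidHom) h
  ext x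
  exact DFunLike.congr_fun h2 x

/-- Lift a family of homomorphisms with commuting adjacent images to the graph
product. -/
def glift {K : Type*} [Group K] (f : ∀ w, G w →* K)
    (hf : ∀ a b, Γ.Adj a b → ∀ (g : G a) (h : G b), Commute (f a g) (f b h)) :
    GraphProduct Γ G →* K :=
  QuotientGroup.lift _ (Monoid.CoprodI.lift f) (Subgroup.normalClosure_le_normal (by
    rintro y ⟨a, b, hab, g, h, rfl⟩
    rw [SetLike.mem_coe, MonoidHom.mem_ker, ← commutatorElement_def]
    simp only [map_commutatorElement, Monoid.CoprodI.lift_of]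
    exact commutatorElement_eq_one_iff_commute.mpr (hf a b hab g h)))

theorem glift_of {K : Type*} [Group K] (f : ∀ w, G w →* K)
    (hf : ∀ a b, Γ.Adj a b → ∀ (g : G a) (h : G b), Commute (f a g) (f b h))
    {w : V} (g : G w) : glift f hf (of Γ G g) = f w g := by
  show QuotientGroup.lift _ _ _
      (QuotientGroup.mk (s := Subgroup.normalClosure (rels Γ G)) (Monoid.CoprodI.of g)) = _
  rw [QuotientGroup.lift_mk]
  exact Monoid.CoprodI.lift_of f g

theorem IsCompOf.subset {S C : Set V} (h : IsCompOf Γ S C) : C ⊆ S := by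
  obtain ⟨c, rfl⟩ := h
  rintro x ⟨y, -, rfl⟩
  exact y.2

theorem IsCompOf.nonempty {S C : Set V} (h : IsCompOf Γ S C) : C.Nonempty := by
  obtain ⟨c, rfl⟩ := h
  refine c.ind ?_
  intro y
  exact ⟨y.1, y, (SimpleGraph.ConnectedComponent.mem_supp_iff _ _).mpr rfl, rfl⟩

theorem IsCompOf.eq_of_mem {S C D : Set V} (hC : IsCompOf Γ S C) (hD : IsCompOf Γ S D)
    {u : V} (huC : u ∈ C) (huD : u ∈ D) : C = D := by
  obtain ⟨c, rfl⟩ := hC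
  obtain ⟨d, rfl⟩ := hD
  obtain ⟨x, hx, hxu⟩ := huC
  obtain ⟨y, hy, hyu⟩ := huD
  cases Subtype.ext (hxu.trans hyu.symm : x.1 = y.1)
  rw [SimpleGraph.ConnectedComponent.mem_supp_iff] at hx hy
  rw [← hx, ← hy]

theorem exists_isCompOf {S : Set V} {u : V} (hu : u ∈ S) :
    ∃ C : Set V, IsCompOf Γ S C ∧ u ∈ C :=
  ⟨_, ⟨(Γ.induce S).connectedComponentMk ⟨u, hu⟩, rfl⟩,
    ⟨⟨u, hu⟩, (SimpleGraph.ConnectedComponent.mem_supp_iff _ _).mpr rfl, rfl⟩⟩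

theorem not_mem_star_iff {v u : V} : u ∉ star Γ v ↔ u ≠ v ∧ ¬ Γ.Adj v u := by
  simp [star, not_or]

theorem gen_comm {v : V} {gv : G v} (hg : Subgroup.zpowers gv = ⊤) (x y : G v) :
    Commute x y := by
  obtain ⟨m, rfl⟩ := Subgroup.mem_zpowers_iff.mp (hg ▸ Subgroup.mem_top x)
  obtain ⟨n, rfl⟩ := Subgroup.mem_zpowers_iff.mp (hg ▸ Subgroup.mem_top y)
  exact (Commute.refl gv).zpow_zpow m n

theorem gen_zpow_eq_iff {v : V} {gv : G v} (hg : Subgroup.zpowers gv = ⊤) (m n : ℤ) :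
    gv ^ m = gv ^ n ↔ m ≡ n [ZMOD (Nat.card (G v))] := by
  rw [zpow_eq_zpow_iff_modEq]
  have : orderOf gv = Nat.card (G v) :=
    orderOf_eq_card_of_forall_mem_zpowers (fun x => hg ▸ Subgroup.mem_top x)
  rw [this]

end Aux
section PC

variable {Γ : SimpleGraph V} {G : V → Type uG} [∀ v, Group (G v)]

theorem pc_zpow {gen : ∀ v, G v} {π : MulAut (GraphProduct Γ G)} {v : V} {C : Set V}
    (h : IsPartialConj Γ G gen π v C) (hv : v ∉ C) (m : ℤ) :
    (∀ u ∈ C, ∀ g : G u, (π ^ m) (of Γ G g)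
        = of Γ G (gen v) ^ m * of Γ G g * (of Γ G (gen v) ^ m)⁻¹) ∧
    (∀ u, u ∉ C → ∀ g : G u, (π ^ m) (of Γ G g) = of Γ G g) := by
  set a := of Γ G (gen v) with ha
  have hfix : π a = a := h.2 v hv (gen v)
  have happ_inv : ∀ x : GraphProduct Γ G, π (π⁻¹ x) = x := by
    intro x
    rw [← MulAut.mul_apply, mul_inv_cancel, MulAut.one_apply]
  have hinv_mem : ∀ u ∈ C, ∀ g : G u, (π⁻¹ : MulAut _) (of Γ G g)
      = a⁻¹ * of Γ G g * a := by
    intro u hu g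
    apply π.injective
    rw [happ_inv, map_mul, map_mul, map_inv, hfix, h.1 u hu g, ← ha]
    group
  have hinv_not : ∀ u, u ∉ C → ∀ g : G u, (π⁻¹ : MulAut _) (of Γ G g) = of Γ G g := by
    intro u hu g
    apply π.injective
    rw [happ_inv, h.2 u hu g]
  induction m using Int.induction_on with
  | zero => constructor <;> intro u hu g <;> simp
  | succ n ih =>
      have hstep : π ^ ((n : ℤ) + 1) = π ^ (n : ℤ) * π := zpow_add_one π n
      constructor <;> intro u hu g
      · rw [hstep, MulAut.mul_apply, h.1 u hu g, map_mul, map_mul, map_inv,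
          ih.2 v hv (gen v), ih.1 u hu g]
        rw [← ha]
        group
      · rw [hstep, MulAut.mul_apply, h.2 u hu g, ih.2 u hu g]
  | pred n ih =>
      have hstep : π ^ (-(n : ℤ) - 1) = π ^ (-(n : ℤ)) * π⁻¹ := zpow_sub_one π (-n)
      constructor <;> intro u hu g
      · rw [hstep, MulAut.mul_apply, hinv_mem u hu g, map_mul, map_mul, map_inv,
          ih.2 v hv (gen v), ih.1 u hu g]
        rw [← ha]
        group
      · rw [hstep, MulAut.mul_apply, hinv_not u hu g, ih.2 u hu g]

end PC

section ConjTransport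

theorem conj_iterate {Gp K : Type*} [Group Gp] [Group K] (ρ : Gp →* K)
    (e : MulAut Gp) (s : K) (h : ∀ x, ρ (e x) = s * ρ x * s⁻¹) (m : ℤ) (x : Gp) :
    ρ ((e ^ m) x) = s ^ m * ρ x * (s ^ m)⁻¹ := by
  have happ_inv : ∀ x : Gp, e (e⁻¹ x) = x := by
    intro x
    rw [← MulAut.mul_apply, mul_inv_cancel, MulAut.one_apply]
  have hinv : ∀ x, ρ (e⁻¹ x) = s⁻¹ * ρ x * s := by
    intro x
    have h2 := h (e⁻¹ x)
    rw [happ_inv] at h2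
    rw [h2]
    group
  induction m using Int.induction_on generalizing x with
  | zero => simp
  | succ n ih =>
      rw [zpow_add_one, MulAut.mul_apply, ih (e x), h x]
      group
  | pred n ih =>
      rw [zpow_sub_one, MulAut.mul_apply, ih (e⁻¹ x), hinv x]
      group

theorem conj_list {ι : Type*} {Gp K : Type*} [Group Gp] [Group K] (ρ : Gp →* K)
    (l : List ι) (e : ι → MulAut Gp) (s : ι → K)
    (h : ∀ i ∈ l, ∀ x, ρ ((e i) x) = s i * ρ x * (s i)⁻¹) (x : Gp) :
    ρ ((l.map e).prod x) = (l.map s).prod * ρ x * ((l.map s).prod)⁻¹ := by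
  induction l generalizing x with
  | nil => simp
  | cons a l ih =>
      rw [List.map_cons, List.prod_cons, MulAut.mul_apply,
        h a (List.mem_cons_self) _, ih (fun i hi => h i (List.mem_cons_of_mem a hi)) x,
        List.map_cons, List.prod_cons]
      group

theorem prod_single {ι M : Type*} [Monoid M] (l : List ι) (hnd : l.Nodup)
    (p : ι) (hp : p ∈ l) (f : ι → M) (hf : ∀ q ∈ l, q ≠ p → f q = 1) :
    (l.map f).prod = f p := by
  induction l with
  | nil => cases hp
  | cons a l ih =>
      rw [List.map_cons, List.prod_cons]
      rcases List.mem_cons.mp hp with rfl | hp'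
      · have h1 : (l.map f).prod = 1 := by
          apply List.prod_eq_one
          intro x hx
          obtain ⟨q, hq, rfl⟩ := List.mem_map.mp hx
          exact hf q (List.mem_cons_of_mem _ hq)
            (fun h => (List.nodup_cons.mp hnd).1 (h ▸ hq))
        rw [h1, mul_one]
      · rw [hf a (List.mem_cons_self)
          (by rintro rfl; exact (List.nodup_cons.mp hnd).1 hp'), one_mul]
        exact ih (List.nodup_cons.mp hnd).2 hp'
          (fun q hq hqp => hf q (List.mem_cons_of_mem _ hq) hqp)

end ConjTransport

section Wreath

variable {A B : Type*} [Group A] [Group B]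

/-- Translation action of `A` on functions `A → B`. -/
def wact : A →* MulAut (A → B) where
  toFun a :=
    { toFun := fun f x => f (a⁻¹ * x)
      invFun := fun f x => f (a * x)
      left_inv := by intro f; funext x; simp [mul_assoc]
      right_inv := by intro f; funext x; simp [mul_assoc]
      map_mul' := by intro f g; rfl }
  map_one' := by ext f x; simp
  map_mul' := by intro a b; ext f x; simp [mul_assoc]

open Classical in
/-- The "delta function at 1" homomorphism `B →* (A → B)`. -/
noncomputable def delta : B →* (A → B) where
  toFun b x := if x = 1 then b else 1
  map_one' := by funext x; simp
  map_mul' := by intro b c; funext x; by_cases h : x = 1 <;> simp [h]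

theorem delta_apply_one (b : B) : delta (A := A) b 1 = b := by simp [delta]

theorem delta_apply_ne (b : B) {x : A} (hx : x ≠ 1) : delta (A := A) b x = 1 := by
  simp [delta, hx]

theorem wreath_right_eq_one {b : B} (hb : b ≠ 1)
    (d : SemidirectProduct (A → B) A wact)
    (hcomm : d * SemidirectProduct.inl (delta b) = SemidirectProduct.inl (delta b) * d) :
    d.right = 1 := by
  by_contra ha
  have h1 := congrArg SemidirectProduct.left hcomm
  simp only [SemidirectProduct.mul_left, SemidirectProduct.left_inl,
    SemidirectProduct.mul_right, SemidirectProduct.right_inl, map_one,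
    MulAut.one_apply] at h1
  -- h1 : d.left * wact d.right (delta b) = delta b * d.left  (roughly)
  have h2 := congrArg (fun f => f d.right) h1
  simp only [Pi.mul_apply] at h2
  have hL : (wact d.right (delta b) : A → B) d.right = b := by
    show delta b (d.right⁻¹ * d.right) = b
    rw [inv_mul_cancel, delta_apply_one]
  have hR : delta b d.right = 1 := delta_apply_ne b ha
  rw [hL, hR, one_mul] at h2
  exact hb (mul_left_cancel (a := d.left d.right) (by rw [mul_one]; exact h2))

end Wreath
section Retraction

variable {Γ : SimpleGraph V} {G : V → Type uG} [∀ v, Group (G v)]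

open Classical in
/-- Family of homomorphisms supported at one vertex. -/
noncomputable def famOne {K : Type*} [Group K] (v : V) (α : G v →* K) :
    ∀ w, G w →* K := fun w =>
  if h : w = v then (Eq.ndrec (motive := fun x => G x →* K) α h.symm) else 1

theorem famOne_self {K : Type*} [Group K] (v : V) (α : G v →* K) :
    famOne (G := G) v α v = α := by
  simp [famOne]

theorem famOne_of_ne {K : Type*} [Group K] {v w : V} (h : w ≠ v) (α : G v →* K) :
    famOne (G := G) v α w = 1 := by
  simp [famOne, h]

open Classical in
/-- Family of homomorphisms supported at two vertices. -/
noncomputable def famTwo {K : Type*} [Group K] (v u : V) (α : G v →* K) (β : G u →* K) :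
    ∀ w, G w →* K := fun w =>
  if h : w = v then (Eq.ndrec (motive := fun x => G x →* K) α h.symm)
  else if h' : w = u then (Eq.ndrec (motive := fun x => G x →* K) β h'.symm)
  else 1

theorem famTwo_self_v {K : Type*} [Group K] (v u : V) (α : G v →* K) (β : G u →* K) :
    famTwo (G := G) v u α β v = α := by
  simp [famTwo]

theorem famTwo_self_u {K : Type*} [Group K] {v u : V} (huv : u ≠ v)
    (α : G v →* K) (β : G u →* K) :
    famTwo (G := G) v u α β u = β := by
  simp [famTwo, huv]

theorem famTwo_of_ne {K : Type*} [Group K] {v u w : V} (h1 : w ≠ v) (h2 : w ≠ u)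
    (α : G v →* K) (β : G u →* K) :
    famTwo (G := G) v u α β w = 1 := by
  simp [famTwo, h1, h2]

/-- The retraction of the graph product onto a single vertex group. -/
noncomputable def rhoV (Γ : SimpleGraph V) (G : V → Type uG) [∀ v, Group (G v)] (v : V) :
    GraphProduct Γ G →* G v :=
  glift (famOne v (MonoidHom.id (G v))) (by
    intro a b hab g h
    by_cases hb : b = v
    · by_cases ha : a = v
      · exact (Γ.loopless.irrefl _ (ha ▸ hb ▸ hab)).elim
      · rw [famOne_of_ne ha]
        simpa using Commute.one_left _
    · rw [famOne_of_ne hb]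
      simpa using Commute.one_right _)

theorem rhoV_of_self {v : V} (g : G v) : rhoV Γ G v (of Γ G g) = g := by
  rw [rhoV, glift_of, famOne_self]
  rfl

theorem rhoV_of_ne {v w : V} (h : w ≠ v) (g : G w) : rhoV Γ G v (of Γ G g) = 1 := by
  rw [rhoV, glift_of, famOne_of_ne h]
  rfl

/-- The retraction of the graph product onto the wreath-type group built from two
non-adjacent vertices. -/
noncomputable def rhoTwo (Γ : SimpleGraph V) (G : V → Type uG) [∀ v, Group (G v)]
    (v u : V) (huv : u ≠ v) (hnadj : ¬ Γ.Adj v u) :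
    GraphProduct Γ G →* SemidirectProduct (G v → G u) (G v) wact :=
  glift (famTwo v u
      (SemidirectProduct.inr : G v →* SemidirectProduct (G v → G u) (G v) wact)
      ((SemidirectProduct.inl :
          (G v → G u) →* SemidirectProduct (G v → G u) (G v) wact).comp delta)) (by
    intro a b hab g h
    by_cases hb1 : b = v
    · by_cases ha1 : a = v
      · exact (Γ.loopless.irrefl _ (ha1 ▸ hb1 ▸ hab)).elim
      · by_cases ha2 : a = u
        · exact (hnadj (ha2 ▸ hb1 ▸ hab).symm).elim
        · rw [famTwo_of_ne ha1 ha2]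
          simpa using Commute.one_left _
    · by_cases hb2 : b = u
      · by_cases ha1 : a = v
        · exact (hnadj (ha1 ▸ hb2 ▸ hab)).elim
        · by_cases ha2 : a = u
          · exact (Γ.loopless.irrefl _ (ha2 ▸ hb2 ▸ hab)).elim
          · rw [famTwo_of_ne ha1 ha2]
            simpa using Commute.one_left _
      · rw [famTwo_of_ne hb1 hb2]
        simpa using Commute.one_right _)

theorem rhoTwo_of_v {v u : V} (huv : u ≠ v) (hnadj : ¬ Γ.Adj v u) (g : G v) :
    rhoTwo Γ G v u huv hnadj (of Γ G g) = SemidirectProduct.inr g := by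
  rw [rhoTwo, glift_of, famTwo_self_v]

theorem rhoTwo_of_u {v u : V} (huv : u ≠ v) (hnadj : ¬ Γ.Adj v u) (g : G u) :
    rhoTwo Γ G v u huv hnadj (of Γ G g) = SemidirectProduct.inl (delta g) := by
  rw [rhoTwo, glift_of, famTwo_self_u huv]
  rfl

theorem rhoTwo_of_other {v u w : V} (huv : u ≠ v) (hnadj : ¬ Γ.Adj v u)
    (h1 : w ≠ v) (h2 : w ≠ u) (g : G w) :
    rhoTwo Γ G v u huv hnadj (of Γ G g) = 1 := by
  rw [rhoTwo, glift_of, famTwo_of_ne h1 h2]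
  rfl

end Retraction
section KeyForward

variable {Γ : SimpleGraph V} {G : V → Type uG} [∀ v, Group (G v)]

theorem key_forward (gen : ∀ v, G v) (hgen : ∀ v, Subgroup.zpowers (gen v) = ⊤)
    (hgenne : ∀ v, gen v ≠ 1)
    (πfam : TV Γ → MulAut (GraphProduct Γ G))
    (hπ : ∀ p : TV Γ, IsPartialConj Γ G gen (πfam p) p.1.1 p.1.2)
    (k : TV Γ → ℤ) (L : List (TV Γ)) (hnd : L.Nodup)
    (z : GraphProduct Γ G)
    (hz : ∀ x, (L.map fun p => πfam p ^ k p).prod x = z * x * z⁻¹)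
    (p : TV Γ) (hp : p ∈ L) {u : V} (hu : u ∈ p.1.2) :
    rhoV Γ G p.1.1 z = gen p.1.1 ^ k p := by
  classical
  have hstar : ∀ q : TV Γ, ∀ w ∈ q.1.2, w ∉ star Γ q.1.1 := fun q w hw hmem =>
    q.2.subset hw hmem
  have hself : ∀ q : TV Γ, q.1.1 ∉ q.1.2 := fun q h =>
    hstar q _ h (Set.mem_insert _ _)
  set v := p.1.1 with hv
  have hust : u ∉ star Γ v := hstar p u hu
  have huv : u ≠ v := (not_mem_star_iff.mp hust).1
  have hnadj : ¬ Γ.Adj v u := (not_mem_star_iff.mp hust).2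
  let t : TV Γ → SemidirectProduct (G v → G u) (G v) wact := fun q =>
    if (v ∈ q.1.2 ∨ u ∈ q.1.2) then (rhoTwo Γ G v u huv hnadj) (of Γ G (gen q.1.1)) else 1
  -- Step 1: (rhoTwo Γ G v u huv hnadj) ∘ π_q = conj (t q) ∘ (rhoTwo Γ G v u huv hnadj)
  have step1 : ∀ q : TV Γ, ∀ x, (rhoTwo Γ G v u huv hnadj) ((πfam q) x) = t q * (rhoTwo Γ G v u huv hnadj) x * (t q)⁻¹ := by
    intro q
    have hhom : (rhoTwo Γ G v u huv hnadj).comp (MulEquiv.toMonoidHom (πfam q)) =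
        ((MulAut.conj (t q)).toMonoidHom).comp (rhoTwo Γ G v u huv hnadj) := by
      apply hom_ext
      intro w g
      simp only [MonoidHom.comp_apply, MulEquiv.coe_toMonoidHom, MulAut.conj_apply]
      by_cases hw : w ∈ q.1.2
      · rw [(hπ q).1 w hw g, map_mul, map_mul, map_inv]
        by_cases hwv : w = v
        · have hcond : v ∈ q.1.2 ∨ u ∈ q.1.2 := Or.inl (hwv ▸ hw)
          show _ = t q * _ * (t q)⁻¹
          simp only [t, if_pos hcond]
        · by_cases hwu : w = u
          · have hcond : v ∈ q.1.2 ∨ u ∈ q.1.2 := Or.inr (hwu ▸ hw)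
            show _ = t q * _ * (t q)⁻¹
            simp only [t, if_pos hcond]
          · rw [rhoTwo_of_other huv hnadj hwv hwu]
            simp
      · rw [(hπ q).2 w hw g]
        by_cases hwv : w = v
        · subst hwv
          rw [rhoTwo_of_v huv hnadj g]
          have hcomm : Commute (t q) (SemidirectProduct.inr g : SemidirectProduct (G v → G u) (G v) wact) := by
            show Commute (if _ then _ else _) _
            split_ifs with hcond
            · rcases hcond with hc | hc
              · exact absurd hc hw
              · by_cases hq1 : q.1.1 = v
                · rw [congrArg (fun x => of Γ G (gen x)) hq1, rhoTwo_of_v huv hnadj]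
                  exact (gen_comm (hgen v) (gen v) g).map _
                · by_cases hq2 : q.1.1 = u
                  · exact absurd (show q.1.1 ∈ q.1.2 from hq2.symm ▸ hc) (hself q)
                  · rw [rhoTwo_of_other huv hnadj hq1 hq2]
                    exact Commute.one_left _
            · exact Commute.one_left _
          rw [hcomm.eq, mul_assoc, mul_inv_cancel, mul_one]
        · by_cases hwu : w = u
          · subst hwu
            rw [rhoTwo_of_u huv hnadj g]
            have hcomm : Commute (t q)
                (SemidirectProduct.inl (delta g) : SemidirectProduct (G v → G w) (G v) wact) := by
              show Commute (if _ then _ else _) _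
              split_ifs with hcond
              · rcases hcond with hc | hc
                · by_cases hq1 : q.1.1 = v
                  · exact absurd (show q.1.1 ∈ q.1.2 from hq1.symm ▸ hc) (hself q)
                  · by_cases hq2 : q.1.1 = w
                    · rw [congrArg (fun x => of Γ G (gen x)) hq2,
                        rhoTwo_of_u huv hnadj]
                      exact ((gen_comm (hgen w) (gen w) g).map delta).map _
                    · rw [rhoTwo_of_other huv hnadj hq1 hq2]
                      exact Commute.one_left _
                · exact absurd hc hw
              · exact Commute.one_left _
            rw [hcomm.eq, mul_assoc, mul_inv_cancel, mul_one]
          · rw [rhoTwo_of_other huv hnadj hwv hwu]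
            simp
    intro x
    have := DFunLike.congr_fun hhom x
    simpa using this
  -- Step 2 and 3
  have step3 : ∀ x, (rhoTwo Γ G v u huv hnadj) ((L.map fun q => πfam q ^ k q).prod x)
      = (L.map fun q => (t q) ^ k q).prod * (rhoTwo Γ G v u huv hnadj) x *
        ((L.map fun q => (t q) ^ k q).prod)⁻¹ :=
    conj_list (rhoTwo Γ G v u huv hnadj) L (fun q => πfam q ^ k q) (fun q => (t q) ^ k q)
      (fun q _ x => conj_iterate (rhoTwo Γ G v u huv hnadj) (πfam q) (t q) (step1 q) (k q) x)
  set T := (L.map fun q => (t q) ^ k q).prod with hT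
  -- the commutation relation
  have hcd : (((rhoTwo Γ G v u huv hnadj) z)⁻¹ * T) * SemidirectProduct.inl (delta (gen u))
      = SemidirectProduct.inl (delta (gen u)) * (((rhoTwo Γ G v u huv hnadj) z)⁻¹ * T) := by
    have h2 := step3 (of Γ G (gen u))
    rw [hz (of Γ G (gen u)), map_mul, map_mul, map_inv,
      rhoTwo_of_u huv hnadj] at h2
    calc (((rhoTwo Γ G v u huv hnadj) z)⁻¹ * T) * SemidirectProduct.inl (delta (gen u))
        = ((rhoTwo Γ G v u huv hnadj) z)⁻¹ * (T * SemidirectProduct.inl (delta (gen u)) * T⁻¹) * T := by group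
      _ = ((rhoTwo Γ G v u huv hnadj) z)⁻¹ * ((rhoTwo Γ G v u huv hnadj) z * SemidirectProduct.inl (delta (gen u)) * ((rhoTwo Γ G v u huv hnadj) z)⁻¹) * T := by
          rw [← h2]
      _ = SemidirectProduct.inl (delta (gen u)) * (((rhoTwo Γ G v u huv hnadj) z)⁻¹ * T) := by group
  have hright : SemidirectProduct.rightHom (((rhoTwo Γ G v u huv hnadj) z)⁻¹ * T) = 1 :=
    wreath_right_eq_one (hgenne u) _ hcd
  have hreq : SemidirectProduct.rightHom ((rhoTwo Γ G v u huv hnadj) z) = SemidirectProduct.rightHom T := by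
    rw [map_mul, map_inv] at hright
    exact (inv_mul_eq_one.mp hright)
  -- compute rightHom T
  have hT2 : SemidirectProduct.rightHom T = gen v ^ k p := by
    rw [hT, map_list_prod, List.map_map]
    have := prod_single L hnd p hp
      (fun q => SemidirectProduct.rightHom ((t q) ^ k q)) ?_
    · rw [Function.comp_def] at *
      rw [this]
      have htp : t p = (SemidirectProduct.inr (gen v) : SemidirectProduct (G v → G u) (G v) wact) := by
        show (if _ then _ else _) = _
        rw [if_pos (Or.inr hu)]
        rw [← hv]
        exact rhoTwo_of_v huv hnadj (gen v)
      rw [map_zpow, htp, SemidirectProduct.rightHom_inr]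
    · intro q hq hqp
      show SemidirectProduct.rightHom ((t q) ^ k q) = 1
      rw [map_zpow]
      have : SemidirectProduct.rightHom (t q) = 1 := by
        show SemidirectProduct.rightHom
          (if (v ∈ q.1.2 ∨ u ∈ q.1.2) then
            (rhoTwo Γ G v u huv hnadj) (of Γ G (gen q.1.1)) else 1) = 1
        split_ifs with hcond
        · by_cases hq1 : q.1.1 = v
          · rcases hcond with hc | hc
            · exact absurd (show q.1.1 ∈ q.1.2 from hq1.symm ▸ hc) (hself q)
            · -- u ∈ q.1.2 and q.1.1 = v forces q = p
              exfalso
              apply hqp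
              have hcomp : IsCompOf Γ ((star Γ v)ᶜ) q.1.2 := hq1 ▸ q.2
              have hsets : q.1.2 = p.1.2 := hcomp.eq_of_mem (hv ▸ p.2) hc hu
              exact Subtype.ext (Prod.ext hq1 hsets)
          · by_cases hq2 : q.1.1 = u
            · rw [congrArg (fun x => of Γ G (gen x)) hq2, rhoTwo_of_u huv hnadj]
              exact SemidirectProduct.rightHom_inl _
            · rw [rhoTwo_of_other huv hnadj hq1 hq2]
              exact map_one _
        · exact map_one _
      rw [this, one_zpow]
  -- rightHom ∘ (rhoTwo Γ G v u huv hnadj) = rhoV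
  have hcomp : SemidirectProduct.rightHom.comp (rhoTwo Γ G v u huv hnadj) = rhoV Γ G v := by
    apply hom_ext
    intro w g
    simp only [MonoidHom.comp_apply]
    by_cases hwv : w = v
    · subst hwv
      rw [rhoTwo_of_v huv hnadj g, SemidirectProduct.rightHom_inr, rhoV_of_self]
    · by_cases hwu : w = u
      · subst hwu
        rw [rhoTwo_of_u huv hnadj g, SemidirectProduct.rightHom_inl, rhoV_of_ne hwv]
      · rw [rhoTwo_of_other huv hnadj hwv hwu, map_one, rhoV_of_ne hwv]
  calc rhoV Γ G v z = SemidirectProduct.rightHom ((rhoTwo Γ G v u huv hnadj) z) := by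
        rw [← hcomp]; rfl
    _ = SemidirectProduct.rightHom T := hreq
    _ = gen v ^ k p := hT2

end KeyForward
section Backward

variable {Γ : SimpleGraph V} {G : V → Type uG} [∀ v, Group (G v)]

theorem TV.not_self_mem (q : TV Γ) : q.1.1 ∉ q.1.2 := fun h =>
  q.2.subset h (Set.mem_insert _ _)

theorem block_fix (gen : ∀ v, G v)
    (πfam : TV Γ → MulAut (GraphProduct Γ G))
    (hπ : ∀ p : TV Γ, IsPartialConj Γ G gen (πfam p) p.1.1 p.1.2)
    (k : TV Γ → ℤ) (B : List (TV Γ))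
    {w : V} (hw : ∀ q ∈ B, w ∉ q.1.2) (g : G w) :
    (B.map fun q => πfam q ^ k q).prod (of Γ G g) = of Γ G g := by
  induction B with
  | nil => simp
  | cons q B ih =>
      rw [List.map_cons, List.prod_cons, MulAut.mul_apply,
        ih (fun r hr => hw r (List.mem_cons_of_mem _ hr)),
        (pc_zpow (hπ q) (TV.not_self_mem q) (k q)).2 w
          (hw q (List.mem_cons_self)) g]

theorem block_mem (gen : ∀ v, G v)
    (πfam : TV Γ → MulAut (GraphProduct Γ G))
    (hπ : ∀ p : TV Γ, IsPartialConj Γ G gen (πfam p) p.1.1 p.1.2)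
    (k : TV Γ → ℤ) (v : V) :
    ∀ (B : List (TV Γ)), B.Nodup → (∀ q ∈ B, q.1.1 = v) →
    ∀ {w : V} {q₀ : TV Γ}, q₀ ∈ B → w ∈ q₀.1.2 → ∀ (g : G w),
    (B.map fun q => πfam q ^ k q).prod (of Γ G g)
      = of Γ G (gen v ^ k q₀) * of Γ G g * (of Γ G (gen v ^ k q₀))⁻¹ := by
  intro B
  induction B with
  | nil => intro _ _ _ _ hq₀ _ _; cases hq₀
  | cons q B ih =>
      intro hndB hBv w q₀ hq₀ hw g
      have hqv := hBv q (List.mem_cons_self)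
      rw [List.map_cons, List.prod_cons, MulAut.mul_apply]
      rcases List.mem_cons.mp hq₀ with rfl | hq₀'
      · have htail : ∀ r ∈ B, w ∉ r.1.2 := by
          intro r hr hwr
          have hrv := hBv r (List.mem_cons_of_mem _ hr)
          have h1 : IsCompOf Γ ((star Γ v)ᶜ) r.1.2 := hrv ▸ r.2
          have h2 : IsCompOf Γ ((star Γ v)ᶜ) q₀.1.2 := hqv ▸ q₀.2
          have hsets : r.1.2 = q₀.1.2 := h1.eq_of_mem h2 hwr hw
          have hrq : r = q₀ := Subtype.ext (Prod.ext (hrv.trans hqv.symm) hsets)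
          exact (List.nodup_cons.mp hndB).1 (hrq ▸ hr)
        rw [block_fix gen πfam hπ k B htail g,
          (pc_zpow (hπ q₀) (TV.not_self_mem q₀) (k q₀)).1 w hw g,
          congrArg (fun x => of Γ G (gen x)) hqv, ← map_zpow]
      · have hwq : w ∉ q.1.2 := by
          intro hwq
          have h1 : IsCompOf Γ ((star Γ v)ᶜ) q.1.2 := hqv ▸ q.2
          have hq0v := hBv q₀ (List.mem_cons_of_mem _ hq₀')
          have h2 : IsCompOf Γ ((star Γ v)ᶜ) q₀.1.2 := hq0v ▸ q₀.2
          have hsets : q₀.1.2 = q.1.2 := h2.eq_of_mem h1 hw hwq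
          have hqq : q₀ = q := Subtype.ext (Prod.ext (hq0v.trans hqv.symm) hsets)
          exact (List.nodup_cons.mp hndB).1 (hqq ▸ hq₀')
        rw [ih (List.nodup_cons.mp hndB).2
            (fun r hr => hBv r (List.mem_cons_of_mem _ hr)) hq₀' hw g,
          map_mul, map_mul, map_inv,
          (pc_zpow (hπ q) (TV.not_self_mem q) (k q)).2 w hwq g,
          (pc_zpow (hπ q) (TV.not_self_mem q) (k q)).2 v
            (hqv ▸ TV.not_self_mem q) (gen v ^ k q₀)]

theorem block_conj (gen : ∀ v, G v) (hgen : ∀ v, Subgroup.zpowers (gen v) = ⊤)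
    (πfam : TV Γ → MulAut (GraphProduct Γ G))
    (hπ : ∀ p : TV Γ, IsPartialConj Γ G gen (πfam p) p.1.1 p.1.2)
    (k : TV Γ → ℤ) (v : V) (B : List (TV Γ)) (hndB : B.Nodup)
    (hBv : ∀ q ∈ B, q.1.1 = v)
    (hcomplete : ∀ q : TV Γ, q.1.1 = v → q ∈ B)
    (κ : ℤ) (hκ : ∀ q ∈ B, gen v ^ k q = gen v ^ κ) :
    (B.map fun q => πfam q ^ k q).prod = MulAut.conj (of Γ G (gen v ^ κ)) := by
  apply aut_ext
  intro w g
  rw [MulAut.conj_apply]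
  by_cases hex : ∃ q ∈ B, w ∈ q.1.2
  · obtain ⟨q₀, hq₀, hw⟩ := hex
    rw [block_mem gen πfam hπ k v B hndB hBv hq₀ hw g, hκ q₀ hq₀]
  · push_neg at hex
    rw [block_fix gen πfam hπ k B hex g]
    have hcomm : Commute (of Γ G (gen v ^ κ)) (of Γ G g) := by
      by_cases hwv : w = v
      · subst hwv
        exact (gen_comm (hgen w) (gen w ^ κ) g).map (of Γ G)
      · by_cases hst : w ∈ star Γ v
        · rcases Set.mem_insert_iff.mp hst with h | h
          · exact absurd h hwv
          · exact of_commute Γ G h (gen v ^ κ) g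
        · exfalso
          obtain ⟨C, hC, hwC⟩ := exists_isCompOf (Γ := Γ) (S := (star Γ v)ᶜ) hst
          exact hex ⟨(v, C), hC⟩ (hcomplete ⟨(v, C), hC⟩ rfl) hwC
    rw [hcomm.eq, mul_assoc, mul_inv_cancel, mul_one]

end Backward
section Split

theorem getElem_middle {α : Type*} (l₁ l₂ : List α) (x : α)
    (h : l₁.length < (l₁ ++ x :: l₂).length) :
    (l₁ ++ x :: l₂)[l₁.length]'h = x := by
  rw [List.getElem_append_right (le_refl l₁.length)]
  simp

theorem get_shift {α : Type*} (l₁ l₂ : List α) (i : ℕ) (hi : i < l₂.length)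
    (h : l₁.length + i < (l₁ ++ l₂).length) :
    (l₁ ++ l₂).get ⟨l₁.length + i, h⟩ = l₂.get ⟨i, hi⟩ := by
  have hidx : l₁.length + i - l₁.length = i := by omega
  rw [List.get_eq_getElem, List.get_eq_getElem,
    List.getElem_append_right (Nat.le_add_right _ _)]
  simp only [hidx]

variable {Γ : SimpleGraph V} {G : V → Type uG} [∀ v, Group (G v)]

/-- The list is grouped by vertices. -/
def Grouped (L : List (TV Γ)) : Prop :=
  ∀ i j m : Fin L.length, (i : ℕ) < j → (j : ℕ) < m →
    (L.get i).1.1 = (L.get m).1.1 → (L.get j).1.1 = (L.get i).1.1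

theorem grouped_of_eq {L L' : List (TV Γ)} (h : L = L') (hg : Grouped L) :
    Grouped L' := h ▸ hg

theorem split_conj (gen : ∀ v, G v) (hgen : ∀ v, Subgroup.zpowers (gen v) = ⊤)
    (πfam : TV Γ → MulAut (GraphProduct Γ G))
    (hπ : ∀ p : TV Γ, IsPartialConj Γ G gen (πfam p) p.1.1 p.1.2)
    (k : TV Γ → ℤ)
    (hcong : ∀ p q : TV Γ, p.1.1 = q.1.1 → gen p.1.1 ^ k p = gen p.1.1 ^ k q) :
    ∀ (n : ℕ) (L : List (TV Γ)), L.length ≤ n → L.Nodup → Grouped L →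
    (∀ q ∈ L, ∀ q' : TV Γ, q'.1.1 = q.1.1 → q' ∈ L) →
    ∃ z, (L.map fun q => πfam q ^ k q).prod = MulAut.conj z := by
  intro n
  induction n with
  | zero =>
      intro L hlen _ _ _
      have hL : L = [] := List.eq_nil_of_length_eq_zero (Nat.le_zero.mp hlen)
      exact ⟨1, by simp [hL]⟩
  | succ n ihn =>
      intro L hlen hnd hgrouped hclosed
      classical
      cases L with
      | nil => exact ⟨1, by simp⟩
      | cons p L₀ =>
        set v := p.1.1 with hv
        set B₀ := L₀.takeWhile (fun q => decide (q.1.1 = v)) with hB₀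
        set R := L₀.dropWhile (fun q => decide (q.1.1 = v)) with hRdef
        have hsplit0 : B₀ ++ R = L₀ := by
          rw [hB₀, hRdef]
          exact List.takeWhile_append_dropWhile
        have hsplit : (p :: B₀) ++ R = p :: L₀ := by
          rw [List.cons_append, hsplit0]
        have hg' : Grouped ((p :: B₀) ++ R) := grouped_of_eq hsplit.symm hgrouped
        have hnd' : ((p :: B₀) ++ R).Nodup := hsplit ▸ hnd
        -- all elements of p :: B₀ have vertex v
        have hBv : ∀ q ∈ p :: B₀, q.1.1 = v := by
          intro q hq
          rcases List.mem_cons.mp hq with rfl | hq'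
          · exact hv.symm
          · rw [hB₀] at hq'
            exact of_decide_eq_true (List.mem_takeWhile_imp
              (p := fun q : TV Γ => decide (q.1.1 = v)) (l := L₀) hq')
        -- prefix property
        have hpref : ∀ (j m : Fin ((p :: B₀) ++ R).length), (j : ℕ) ≤ m →
            (((p :: B₀) ++ R).get m).1.1 = v → (((p :: B₀) ++ R).get j).1.1 = v := by
          intro j m hjm hm
          rcases Nat.eq_or_lt_of_le hjm with heq | hlt
          · have : j = m := Fin.ext heq
            rw [this]
            exact hm
          · rcases Nat.eq_zero_or_pos (j : ℕ) with hj0 | hjpos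
            · have hj : j = ⟨0, by simp⟩ := Fin.ext hj0
              rw [hj]
              exact hv.symm
            · have h0 : ((p :: B₀) ++ R).get ⟨0, by simp⟩ = p := rfl
              have := hg' ⟨0, by simp⟩ j m hjpos hlt (by rw [h0, hm, hv])
              rw [this, h0, ← hv]
        -- all elements of R have vertex ≠ v
        have hRv : ∀ q ∈ R, q.1.1 ≠ v := by
          intro q hq hqv
          cases hR : R with
          | nil => rw [hR] at hq; cases hq
          | cons r R' =>
            have hEq : L₀.dropWhile (fun q : TV Γ => decide (q.1.1 = v)) = r :: R' := by
              rw [← hRdef]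
              exact hR
            have h0 : L₀.dropWhile (fun q : TV Γ => decide (q.1.1 = v)) ≠ [] := by
              rw [hEq]
              simp
            have hrhead := List.head_dropWhile_not
              (fun q : TV Γ => decide (q.1.1 = v)) (l := L₀) h0
            simp only [hEq, List.head_cons] at hrhead
            have hrv : r.1.1 ≠ v := by simpa using hrhead
            rw [hR] at hq
            rcases List.mem_cons.mp hq with rfl | hq'
            · exact hrv hqv
            · obtain ⟨s, t, hst⟩ := List.append_of_mem hq'
              -- (p :: B₀) ++ R = ((p :: B₀) ++ r :: s) ++ q :: t
              have hL' : (p :: B₀) ++ R = ((p :: B₀) ++ r :: s) ++ q :: t := by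
                rw [hR, hst]
                simp
              have hjlt : (p :: B₀).length < ((p :: B₀) ++ R).length := by
                rw [hR]
                simp
              have hmlt : ((p :: B₀) ++ r :: s).length <
                  ((p :: B₀) ++ R).length := by
                rw [hR, hst]
                simp
              have hL2 : (p :: B₀) ++ R = (p :: B₀) ++ r :: (s ++ q :: t) := by
                rw [hR, hst]
              have hgetj : (((p :: B₀) ++ R).get ⟨(p :: B₀).length, hjlt⟩) = r := by
                show ((p :: B₀) ++ R)[(p :: B₀).length]'hjlt = r
                rw [List.getElem_of_eq hL2]
                exact getElem_middle _ _ _ _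
              have hgetm : (((p :: B₀) ++ R).get
                  ⟨((p :: B₀) ++ r :: s).length, hmlt⟩) = q := by
                show ((p :: B₀) ++ R)[((p :: B₀) ++ r :: s).length]'hmlt = q
                rw [List.getElem_of_eq hL']
                exact getElem_middle _ _ _ _
              have hmv : (((p :: B₀) ++ R).get
                  ⟨((p :: B₀) ++ r :: s).length, hmlt⟩).1.1 = v := by
                rw [hgetm]; exact hqv
              have := hpref ⟨(p :: B₀).length, hjlt⟩
                ⟨((p :: B₀) ++ r :: s).length, hmlt⟩
                (by simp only [List.length_append, List.length_cons]; omega) hmv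
              rw [hgetj] at this
              exact hrv this
        -- nodup parts
        have hndB : (p :: B₀).Nodup := (List.sublist_append_left _ _).nodup hnd'
        have hndR : R.Nodup := (List.sublist_append_right _ _).nodup hnd'
        -- closedness of parts
        have hmemL : ∀ q ∈ R, q ∈ p :: L₀ := by
          intro q hq
          rw [← hsplit]
          exact List.mem_append_right _ hq
        have hRclosed : ∀ q ∈ R, ∀ q' : TV Γ, q'.1.1 = q.1.1 → q' ∈ R := by
          intro q hq q' hq'
          have hq'L : q' ∈ p :: L₀ := hclosed q (hmemL q hq) q' hq'
          rw [← hsplit] at hq'L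
          rcases List.mem_append.mp hq'L with hB | hR
          · exact absurd (hBv q' hB) (hq' ▸ hRv q hq)
          · exact hR
        have hBcomplete : ∀ q : TV Γ, q.1.1 = v → q ∈ p :: B₀ := by
          intro q hq
          have hqL : q ∈ p :: L₀ :=
            hclosed p (List.mem_cons_self) q (hq.trans hv)
          rw [← hsplit] at hqL
          rcases List.mem_append.mp hqL with hB | hR
          · exact hB
          · exact absurd hq (hRv q hR)
        -- grouped for R
        have hRgrouped : Grouped R := by
          intro i j m hij hjm heq
          have hi' : (p :: B₀).length + (i : ℕ) < ((p :: B₀) ++ R).length := by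
            simp; omega
          have hj' : (p :: B₀).length + (j : ℕ) < ((p :: B₀) ++ R).length := by
            simp; omega
          have hm' : (p :: B₀).length + (m : ℕ) < ((p :: B₀) ++ R).length := by
            simp; omega
          have hgi := get_shift (p :: B₀) R (i : ℕ) i.2 hi'
          have hgj := get_shift (p :: B₀) R (j : ℕ) j.2 hj'
          have hgm := get_shift (p :: B₀) R (m : ℕ) m.2 hm'
          have := hg' ⟨_, hi'⟩ ⟨_, hj'⟩ ⟨_, hm'⟩ (by simpa using hij)
            (by simpa using hjm) (by rw [hgi, hgm]; simp [Fin.eta]; exact heq)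
          rw [hgi, hgj] at this
          simpa using this
        -- lengths
        have hRlen : R.length ≤ n := by
          have := congrArg List.length hsplit
          simp only [List.length_append, List.length_cons] at this hlen
          omega
        obtain ⟨z₂, hz₂⟩ := ihn R hRlen hndR hRgrouped hRclosed
        have hκ : ∀ q ∈ p :: B₀, gen v ^ k q = gen v ^ k p := by
          intro q hq
          have h1 := hcong q p ((hBv q hq).trans hv)
          exact (hBv q hq) ▸ h1
        have hBlock := block_conj gen hgen πfam hπ k v (p :: B₀) hndB hBv
          hBcomplete (k p) hκ
        refine ⟨of Γ G (gen v ^ k p) * z₂, ?_⟩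
        rw [← hsplit, List.map_append, List.prod_append, hBlock, hz₂, map_mul]

end Split
/-- For a finite connected graph with no SIL, a product
`∏_i ∏_C π_{v_i,C}^{k_{v_i,C}}` (taken along an enumeration `L` of all pairs `(v,C)`
grouped by vertex) is an inner automorphism of `G_Γ` if and only if for each vertex the
exponents are congruent modulo the order of the vertex group. -/
theorem product_inner_iff_congruent {V : Type u} [Finite V] (Γ : SimpleGraph V)
    (hconn : Γ.Connected) (hsil : ¬ HasSIL Γ)
    (G : V → Type uG) [∀ v, Group (G v)] [∀ v, Nontrivial (G v)]
    (gen : ∀ v, G v) (hgen : ∀ v, Subgroup.zpowers (gen v) = ⊤)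
    (πfam : TV Γ → MulAut (GraphProduct Γ G))
    (hπ : ∀ p : TV Γ, IsPartialConj Γ G gen (πfam p) p.1.1 p.1.2)
    (k : TV Γ → ℤ)
    (L : List (TV Γ)) (hnd : L.Nodup) (hall : ∀ p : TV Γ, p ∈ L)
    (hgrouped : ∀ i j m : Fin L.length, (i : ℕ) < j → (j : ℕ) < m →
      (L.get i).1.1 = (L.get m).1.1 → (L.get j).1.1 = (L.get i).1.1) :
    (L.map fun p => πfam p ^ k p).prod ∈
        (MulAut.conj : GraphProduct Γ G →* MulAut (GraphProduct Γ G)).range ↔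
      ∀ p q : TV Γ, p.1.1 = q.1.1 → k p ≡ k q [ZMOD (Nat.card (G p.1.1))] := by
  classical
  have hgenne : ∀ v, gen v ≠ 1 := by
    intro v hv1
    have h1 := hgen v
    rw [hv1, Subgroup.zpowers_one_eq_bot] at h1
    obtain ⟨x, hx⟩ := exists_ne (1 : G v)
    have hxbot : x ∈ (⊥ : Subgroup (G v)) := h1 ▸ Subgroup.mem_top x
    exact hx (Subgroup.mem_bot.mp hxbot)
  constructor
  · intro hmem
    rw [MonoidHom.mem_range] at hmem
    obtain ⟨z, hz⟩ := hmem
    intro p q hpq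
    obtain ⟨u, hu⟩ := p.2.nonempty
    obtain ⟨u', hu'⟩ := q.2.nonempty
    have hzz : ∀ x, (L.map fun p => πfam p ^ k p).prod x = z * x * z⁻¹ := by
      intro x
      rw [← hz, MulAut.conj_apply]
    have h1 := key_forward gen hgen hgenne πfam hπ k L hnd z hzz p (hall p) hu
    have h2 := key_forward gen hgen hgenne πfam hπ k L hnd z hzz q (hall q) hu'
    obtain ⟨⟨vp, Cp⟩, hCp⟩ := p
    obtain ⟨⟨vq, Cq⟩, hCq⟩ := q
    have hvv : vp = vq := hpq
    subst hvv
    have h3 : gen vp ^ k ⟨(vp, Cp), hCp⟩ = gen vp ^ k ⟨(vp, Cq), hCq⟩ :=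
      h1.symm.trans h2
    exact (gen_zpow_eq_iff (hgen vp) _ _).mp h3
  · intro hcong
    have hcong' : ∀ p q : TV Γ, p.1.1 = q.1.1 →
        gen p.1.1 ^ k p = gen p.1.1 ^ k q := by
      intro p q h
      exact (gen_zpow_eq_iff (hgen p.1.1) _ _).mpr (hcong p q h)
    obtain ⟨z, hz⟩ := split_conj gen hgen πfam hπ k hcong' L.length L le_rfl hnd
      hgrouped (fun q _ q' _ => hall q')
    rw [MonoidHom.mem_range]
    exact ⟨z, hz.symm⟩

end ArXiv
end
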